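/- Let Ω ⊆ ℝ^N be a bounded open set and Φ : Ω × ℝ → ℝ be such that Φ(x, ·) is non-decreasing for each x ∈ Ω. Let w̲, w̄ be functions on ℝ^N, continuous on the closure of Ω and twice differentiable in Ω, with w̲ ≤ w̄ on ℝ^N \ Ω (including ∂Ω). Assume the strict inequality -Δw̲(x) + Φ(x, L w̲(x)) < -Δw̄(x) + Φ(x, L w̄(x)) holds for every x ∈ Ω, where L denotes the fractional Laplacian (-Δ)^σ defined pointwise as a principal value integral, assumed well-defined on w̲ and w̄ at every point of Ω. Then w̲ ≤ w̄ in Ω. -/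

import Mathlib

open Real MeasureTheory Metric Set Filter Bornology
open scoped Topology

/-- The classical Laplacian on `ℝ^N`, as the sum of the pure second derivatives. -/
noncomputable def lap {n : ℕ} (u : EuclideanSpace ℝ (Fin n) → ℝ)
    (x : EuclideanSpace ℝ (Fin n)) : ℝ :=
  ∑ i : Fin n, iteratedFDeriv ℝ 2 u x ![EuclideanSpace.single i 1, EuclideanSpace.single i 1]

/-- `L` is the value of the fractional Laplacian `(-Δ)^σ w (x)`, defined as the
principal value integral `c P.V.∫ (w(x)-w(y))/|x-y|^{N+2σ} dy`, assumed well-defined: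
all truncated integrals exist and converge as the truncation parameter `ε ↓ 0`. -/
def IsFracLap (n : ℕ) (c σ : ℝ) (w : EuclideanSpace ℝ (Fin n) → ℝ)
    (x : EuclideanSpace ℝ (Fin n)) (L : ℝ) : Prop :=
  (∀ ε > (0:ℝ), IntegrableOn
      (fun y => (w x - w y) / dist x y ^ ((n : ℝ) + 2 * σ)) {y | ε ≤ dist x y}) ∧
  Filter.Tendsto
    (fun ε : ℝ => c * ∫ y in {y | ε ≤ dist x y},
        (w x - w y) / dist x y ^ ((n : ℝ) + 2 * σ))
    (nhdsWithin 0 (Set.Ioi 0)) (nhds L)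

/-- Second derivative test in a direction `v`, for a difference of functions, at an
interior global maximum point of the difference. -/
private lemma snd_dir_le {E : Type*} [NormedAddCommGroup E] [NormedSpace ℝ E]
    {Ω : Set E} (hΩo : IsOpen Ω) {z : E} (hz : z ∈ Ω) {wl wu : E → ℝ}
    (hwl : ContDiffOn ℝ 2 wl Ω) (hwu : ContDiffOn ℝ 2 wu Ω)
    (hmax : ∀ y, wl y - wu y ≤ wl z - wu z) (v : E) :
    iteratedFDeriv ℝ 2 wl z ![v, v] ≤ iteratedFDeriv ℝ 2 wu z ![v, v] := by
  rw [iteratedFDeriv_two_apply, iteratedFDeriv_two_apply]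
  simp only [Matrix.cons_val_zero, Matrix.cons_val_one, Matrix.head_cons]
  -- the line through z in direction v
  set φ : ℝ → E := fun t => z + t • v with hφdef
  have hφ0 : φ 0 = z := by simp [hφdef]
  have hφc : Continuous φ := by fun_prop
  have hφd : ∀ t : ℝ, HasDerivAt φ v t := by
    intro t
    simpa [hφdef] using ((hasDerivAt_id t).smul_const v).const_add z
  -- a small δ such that φ t ∈ Ω for |t| < δ
  obtain ⟨δ, hδpos, hδ⟩ : ∃ δ > 0, ∀ t : ℝ, |t| < δ → φ t ∈ Ω := by
    have h1 : φ ⁻¹' Ω ∈ 𝓝 (0 : ℝ) :=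
      hφc.continuousAt.preimage_mem_nhds (by rw [hφ0]; exact hΩo.mem_nhds hz)
    obtain ⟨δ, hδpos, hδ⟩ := Metric.mem_nhds_iff.mp h1
    exact ⟨δ, hδpos, fun t ht => hδ (by simpa [Real.norm_eq_abs] using ht)⟩
  -- g and its derivative D along the line
  set g : ℝ → ℝ := fun t => wl (φ t) - wu (φ t) with hgdef
  set D : ℝ → ℝ := fun t => fderiv ℝ wl (φ t) v - fderiv ℝ wu (φ t) v with hDdef
  have hgd : ∀ t : ℝ, |t| < δ → HasDerivAt g (D t) t := by
    intro t ht
    have hmem := hδ t ht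
    have h1 : HasFDerivAt wl (fderiv ℝ wl (φ t)) (φ t) :=
      ((hwl.differentiableOn two_ne_zero).differentiableAt (hΩo.mem_nhds hmem)).hasFDerivAt
    have h2 : HasFDerivAt wu (fderiv ℝ wu (φ t)) (φ t) :=
      ((hwu.differentiableOn two_ne_zero).differentiableAt (hΩo.mem_nhds hmem)).hasFDerivAt
    exact (h1.comp_hasDerivAt t (hφd t)).sub (h2.comp_hasDerivAt t (hφd t))
  have hgmax : ∀ t : ℝ, g t ≤ g 0 := by
    intro t
    simp only [hgdef, hφ0]
    exact hmax (φ t)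
  -- D 0 = 0 since 0 is a local max of g
  have hD0 : D 0 = 0 := by
    have hloc : IsLocalMax g 0 := Filter.Eventually.of_forall hgmax
    have := (hgd 0 (by simpa using hδpos)).deriv
    rw [← this]
    exact hloc.deriv_eq_zero
  -- D has derivative K at 0
  set K : ℝ := fderiv ℝ (fderiv ℝ wl) z v v - fderiv ℝ (fderiv ℝ wu) z v v with hKdef
  have hDK : HasDerivAt D K 0 := by
    have hcl : ContDiffAt ℝ 2 wl z := hwl.contDiffAt (hΩo.mem_nhds hz)
    have hcu : ContDiffAt ℝ 2 wu z := hwu.contDiffAt (hΩo.mem_nhds hz)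
    have hdl : HasFDerivAt (fderiv ℝ wl) (fderiv ℝ (fderiv ℝ wl) z) z :=
      ((hcl.fderiv_right (m := 1) (by norm_num)).differentiableAt one_ne_zero).hasFDerivAt
    have hdu : HasFDerivAt (fderiv ℝ wu) (fderiv ℝ (fderiv ℝ wu) z) z :=
      ((hcu.fderiv_right (m := 1) (by norm_num)).differentiableAt one_ne_zero).hasFDerivAt
    have hFl : HasFDerivAt (fun y => fderiv ℝ wl y v)
        ((ContinuousLinearMap.apply ℝ ℝ v).comp (fderiv ℝ (fderiv ℝ wl) z)) z :=
      (ContinuousLinearMap.apply ℝ ℝ v).hasFDerivAt.comp z hdl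
    have hFu : HasFDerivAt (fun y => fderiv ℝ wu y v)
        ((ContinuousLinearMap.apply ℝ ℝ v).comp (fderiv ℝ (fderiv ℝ wu) z)) z :=
      (ContinuousLinearMap.apply ℝ ℝ v).hasFDerivAt.comp z hdu
    have h1 := (hFl.comp_hasDerivAt_of_eq 0 (hφd 0) hφ0.symm).sub
        (hFu.comp_hasDerivAt_of_eq 0 (hφd 0) hφ0.symm)
    simp [hDdef, hKdef] at h1
    exact h1
  -- suppose K > 0 and derive a contradiction
  rw [← sub_nonpos]
  by_contra hKpos
  push_neg at hKpos
  rw [← hKdef] at hKpos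
  -- slope of D at 0 is eventually positive on the right
  have hslope : Tendsto (slope D 0) (𝓝[≠] (0:ℝ)) (𝓝 K) :=
    hasDerivAt_iff_tendsto_slope.mp hDK
  have hev1 : ∀ᶠ t in 𝓝[>] (0:ℝ), 0 < slope D 0 t :=
    (hslope.mono_left (nhdsWithin_mono _ (fun x hx => ne_of_gt hx))).eventually
      (eventually_gt_nhds hKpos)
  have hev2 : ∀ᶠ t in 𝓝[>] (0:ℝ), t ∈ Ioo (0:ℝ) δ :=
    Ioo_mem_nhdsGT_of_mem ⟨le_refl 0, hδpos⟩
  obtain ⟨u, hu, hsub⟩ := mem_nhdsGT_iff_exists_Ioo_subset.mp (hev1.and hev2)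
  have hu0 : (0:ℝ) < u := hu
  -- D is positive on Ioo 0 u
  have hDpos : ∀ t ∈ Ioo (0:ℝ) u, 0 < D t := by
    intro t ht
    have h := (hsub ht).1
    rw [slope_def_field, hD0, sub_zero, sub_zero] at h
    have := mul_pos h ht.1
    rwa [div_mul_cancel₀ _ (ne_of_gt ht.1)] at this
  -- choose t1
  set t1 : ℝ := min (u / 2) (δ / 2) with ht1def
  have ht1pos : 0 < t1 := lt_min (by linarith) (by linarith)
  have ht1u : t1 < u := lt_of_le_of_lt (min_le_left _ _) (by linarith)
  have ht1δ : t1 < δ := lt_of_le_of_lt (min_le_right _ _) (by linarith)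
  have habs : ∀ t ∈ Icc (0:ℝ) t1, |t| < δ := by
    intro t ht
    rw [abs_of_nonneg ht.1]
    exact lt_of_le_of_lt ht.2 ht1δ
  have hmono : StrictMonoOn g (Icc (0:ℝ) t1) := by
    apply strictMonoOn_of_deriv_pos (convex_Icc 0 t1)
    · intro t ht
      exact (hgd t (habs t ht)).continuousAt.continuousWithinAt
    · intro t ht
      rw [interior_Icc] at ht
      rw [(hgd t (habs t ⟨ht.1.le, ht.2.le⟩)).deriv]
      exact hDpos t ⟨ht.1, lt_trans ht.2 ht1u⟩
  have : g 0 < g t1 :=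
    hmono ⟨le_refl 0, ht1pos.le⟩ ⟨ht1pos.le, le_refl t1⟩ ht1pos
  exact absurd (hgmax t1) (not_le.mpr this)

/-- Weak comparison principle under a strict inequality: if `Φ(x,·)` is
non-decreasing, `w̲ ≤ w̄` outside `Ω` (including `∂Ω`), and
`-Δw̲ + Φ(·, (-Δ)^σ w̲) < -Δw̄ + Φ(·, (-Δ)^σ w̄)` pointwise in `Ω`, then `w̲ ≤ w̄` in `Ω`. -/
theorem stmt4 {n : ℕ} (hn : 0 < n) (Ω : Set (EuclideanSpace ℝ (Fin n)))
    (hΩo : IsOpen Ω) (hΩb : IsBounded Ω)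
    (Φ : EuclideanSpace ℝ (Fin n) → ℝ → ℝ) (hΦ : ∀ x ∈ Ω, Monotone (Φ x))
    (c σ : ℝ) (hc : 0 < c) (hσ : σ ∈ Ioo (0:ℝ) 1)
    (wl wu : EuclideanSpace ℝ (Fin n) → ℝ) (Ll Lu : EuclideanSpace ℝ (Fin n) → ℝ)
    (hwlc : ContinuousOn wl (closure Ω)) (hwuc : ContinuousOn wu (closure Ω))
    (hwl2 : ContDiffOn ℝ 2 wl Ω) (hwu2 : ContDiffOn ℝ 2 wu Ω)
    (hLl : ∀ x ∈ Ω, IsFracLap n c σ wl x (Ll x))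
    (hLu : ∀ x ∈ Ω, IsFracLap n c σ wu x (Lu x))
    (hout : ∀ x, x ∉ Ω → wl x ≤ wu x)
    (hstrict : ∀ x ∈ Ω, -lap wl x + Φ x (Ll x) < -lap wu x + Φ x (Lu x)) :
    ∀ x ∈ Ω, wl x ≤ wu x := by
  by_contra hcon
  push_neg at hcon
  obtain ⟨x0, hx0, hx0lt⟩ := hcon
  -- maximize w := wl - wu on the compact closure of Ω
  have hcomp : IsCompact (closure Ω) := hΩb.isCompact_closure
  have hne : (closure Ω).Nonempty := ⟨x0, subset_closure hx0⟩
  have hwc : ContinuousOn (fun y => wl y - wu y) (closure Ω) := hwlc.sub hwuc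
  obtain ⟨z, hzc, hzmax⟩ := hcomp.exists_isMaxOn hne hwc
  have hz0 : 0 < wl z - wu z :=
    lt_of_lt_of_le (sub_pos.mpr hx0lt) (hzmax (subset_closure hx0))
  have hzΩ : z ∈ Ω := by
    by_contra hzn
    have := hout z hzn
    linarith
  have hgmax : ∀ y, wl y - wu y ≤ wl z - wu z := by
    intro y
    by_cases hy : y ∈ closure Ω
    · exact hzmax hy
    · have : y ∉ Ω := fun h => hy (subset_closure h)
      have := hout y this
      linarith
  -- classical Laplacian comparison at z
  have hlap : lap wl z ≤ lap wu z := by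
    apply Finset.sum_le_sum
    intro i _
    exact snd_dir_le hΩo hzΩ hwl2 hwu2 hgmax (EuclideanSpace.single i 1)
  -- fractional Laplacian comparison at z
  obtain ⟨hIl, hTl⟩ := hLl z hzΩ
  obtain ⟨hIu, hTu⟩ := hLu z hzΩ
  have hfrac : Lu z ≤ Ll z := by
    rw [← sub_nonneg]
    have hten : Tendsto (fun ε : ℝ =>
        (c * ∫ y in {y | ε ≤ dist z y}, (wl z - wl y) / dist z y ^ ((n : ℝ) + 2 * σ))
        - c * ∫ y in {y | ε ≤ dist z y}, (wu z - wu y) / dist z y ^ ((n : ℝ) + 2 * σ))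
        (𝓝[>] (0:ℝ)) (𝓝 (Ll z - Lu z)) := hTl.sub hTu
    refine ge_of_tendsto hten ?_
    filter_upwards [self_mem_nhdsWithin] with ε hε
    rw [← mul_sub, ← integral_sub (hIl ε hε) (hIu ε hε)]
    apply mul_nonneg hc.le
    apply integral_nonneg
    intro y
    simp only [div_sub_div_same]
    apply div_nonneg
    · have := hgmax y
      linarith
    · exact Real.rpow_nonneg dist_nonneg _
  have hΦle : Φ z (Lu z) ≤ Φ z (Ll z) := hΦ z hzΩ hfrac
  have := hstrict z hzΩ
  linarith
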